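/- In the ballot-discrepancy setting, let π be any probability distribution on B and let U be the uniform distribution on B. Then ∑_{b∈B} π(b)·D(b) ≥ Δ_T/N − 2κ − max(λ − 1, 0) − 4·d_TV(π, U). In particular, if Δ_T ≥ μ·M for some real μ, then ∑_{b∈B} π(b)·D(b) ≥ μ·λ − 2κ − max(λ − 1, 0) − 4·d_TV(π, U). -/

import Mathlib

open Finset

/-- Key combinatorial lemma: the sum of `if ident b ∈ T then v (ident b) else 1`
over all ballots is at least `∑_{ι∈T} v ι + K - M - (N - K)` where `K` is the
number of distinct identifiers. -/
lemma key_ident_sum {B I : Type*} [Fintype B] [DecidableEq I]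
    (ident : B → I) (T : Finset I) (v : I → ℤ)
    (hv : ∀ ι ∈ T, -1 ≤ v ι ∧ v ι ≤ 1) :
    ∑ ι ∈ T, v ι + ((Finset.univ.image ident).card : ℤ) - (T.card : ℤ)
      - ((Fintype.card B : ℤ) - ((Finset.univ.image ident).card : ℤ))
      ≤ ∑ b, (if ident b ∈ T then v (ident b) else 1) := by
  classical
  set S : Finset I := Finset.univ.image ident with hS
  set f : I → ℤ := fun ι => if ι ∈ T then v ι else 1 with hf
  have hcomp : ∑ b, f (ident b)
      = ∑ ι ∈ S, ((Finset.univ.filter fun b => ident b = ι).card : ℤ) * f ι := by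
    rw [Finset.sum_comp f ident]
    simp [nsmul_eq_mul]
    rfl
  have hcard : (Fintype.card B : ℤ)
      = ∑ ι ∈ S, ((Finset.univ.filter fun b => ident b = ι).card : ℤ) := by
    have := Finset.card_eq_sum_card_image ident (Finset.univ : Finset B)
    rw [Finset.card_univ] at this
    exact_mod_cast congrArg (Nat.cast : ℕ → ℤ) this
  -- f ι ≥ -1 for all ι
  have hf1 : ∀ ι, -1 ≤ f ι := by
    intro ι
    by_cases h : ι ∈ T
    · simp only [hf, if_pos h]; exact (hv ι h).1
    · simp [hf, if_neg h]
  -- fiber cards are ≥ 1 on S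
  have hfib1 : ∀ ι ∈ S, 1 ≤ ((Finset.univ.filter fun b => ident b = ι).card : ℤ) := by
    intro ι hι
    rw [hS, Finset.mem_image] at hι
    obtain ⟨b, _, hb⟩ := hι
    have : b ∈ Finset.univ.filter fun b => ident b = ι := by simp [hb]
    have := Finset.card_pos.mpr ⟨b, this⟩
    exact_mod_cast this
  -- step 2: ∑_{ι∈S} n_ι * f ι ≥ ∑_{ι∈S} f ι - (N - K)
  have hstep2 : ∑ ι ∈ S, f ι - ((Fintype.card B : ℤ) - (S.card : ℤ))
      ≤ ∑ ι ∈ S, ((Finset.univ.filter fun b => ident b = ι).card : ℤ) * f ι := by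
    have h1 : ∀ ι ∈ S,
        f ι - (((Finset.univ.filter fun b => ident b = ι).card : ℤ) - 1)
          ≤ ((Finset.univ.filter fun b => ident b = ι).card : ℤ) * f ι := by
      intro ι hι
      have hn := hfib1 ι hι
      have hfι := hf1 ι
      nlinarith
    have := Finset.sum_le_sum h1
    rw [Finset.sum_sub_distrib, Finset.sum_sub_distrib, Finset.sum_const,
      ← hcard] at this
    simpa using this
  -- step 3: ∑_{ι∈S} f ι ≥ ∑_{ι∈T} v ι + K - M
  have hstep3 : ∑ ι ∈ T, v ι + (S.card : ℤ) - (T.card : ℤ) ≤ ∑ ι ∈ S, f ι := by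
    have hSsplit : ∑ ι ∈ S ∩ T, f ι + ∑ ι ∈ S \ T, f ι = ∑ ι ∈ S, f ι :=
      Finset.sum_inter_add_sum_sdiff S T f
    have hTsplit : ∑ ι ∈ T ∩ S, v ι + ∑ ι ∈ T \ S, v ι = ∑ ι ∈ T, v ι :=
      Finset.sum_inter_add_sum_sdiff T S v
    have hSTv : ∑ ι ∈ S ∩ T, f ι = ∑ ι ∈ S ∩ T, v ι := by
      apply Finset.sum_congr rfl
      intro ι hι
      rw [Finset.mem_inter] at hι
      simp [hf, hι.2]
    have hSd : ∑ ι ∈ S \ T, f ι = ((S \ T).card : ℤ) := by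
      rw [Finset.sum_congr rfl (fun ι hι => show f ι = 1 from by
        rw [Finset.mem_sdiff] at hι; simp [hf, hι.2])]
      simp
    have hTd : ∑ ι ∈ T \ S, v ι ≤ ((T \ S).card : ℤ) := by
      calc ∑ ι ∈ T \ S, v ι ≤ ∑ _ι ∈ T \ S, (1 : ℤ) := by
            apply Finset.sum_le_sum
            intro ι hι
            exact (hv ι (Finset.mem_sdiff.mp hι).1).2
        _ = ((T \ S).card : ℤ) := by simp
    have hcard1 : ((S \ T).card : ℤ) = (S.card : ℤ) - ((S ∩ T).card : ℤ) := by
      have := Finset.card_sdiff_add_card_inter S T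
      omega
    have hcard2 : ((T \ S).card : ℤ) = (T.card : ℤ) - ((T ∩ S).card : ℤ) := by
      have := Finset.card_sdiff_add_card_inter T S
      omega
    have hic : T ∩ S = S ∩ T := Finset.inter_comm T S
    have hicv : ∑ ι ∈ T ∩ S, v ι = ∑ ι ∈ S ∩ T, v ι := by rw [hic]
    have hicc : ((T ∩ S).card : ℤ) = ((S ∩ T).card : ℤ) := by rw [hic]
    omega
  have hfinal : ∑ ι ∈ T, v ι + (S.card : ℤ) - (T.card : ℤ)
      - ((Fintype.card B : ℤ) - (S.card : ℤ))
      ≤ ∑ b, f (ident b) := by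
    rw [hcomp]
    omega
  simpa [hf] using hfinal

theorem general_ballot_law_lower_bound
    {B I : Type*} [Fintype B] [Nonempty B] [DecidableEq I]
    (ident : B → I)
    (marg : B → ℤ) (hmarg : ∀ b, marg b = -1 ∨ marg b = 0 ∨ marg b = 1)
    (T : Finset I)
    (v : I → ℤ) (hv : ∀ ι ∈ T, v ι = -1 ∨ v ι = 0 ∨ v ι = 1)
    (D : B → ℤ)
    (hD : ∀ b, D b = if ident b ∈ T then v (ident b) - marg b else 1 - marg b)
    (N M : ℕ) (hN : N = Fintype.card B) (hM : M = T.card)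
    (lam κ : ℝ)
    (hlam : lam = (M : ℝ) / (N : ℝ))
    (hκ : κ = ((N : ℝ) - ((Finset.univ.image ident).card : ℝ)) / (N : ℝ))
    (ΔT : ℤ) (hΔT : ΔT = ∑ ι ∈ T, v ι - ∑ b, marg b)
    (π : B → ℝ) (hπ0 : ∀ b, 0 ≤ π b) (hπ1 : ∑ b, π b = 1)
    (U : B → ℝ) (hU : ∀ b, U b = 1 / (N : ℝ)) :
    (∑ b, π b * (D b : ℝ) ≥
        (ΔT : ℝ) / (N : ℝ) - 2 * κ - max (lam - 1) 0 -
          4 * ((1 / 2) * ∑ b, |π b - U b|)) ∧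
      (∀ μ : ℝ, (ΔT : ℝ) ≥ μ * (M : ℝ) →
        ∑ b, π b * (D b : ℝ) ≥
          μ * lam - 2 * κ - max (lam - 1) 0 -
            4 * ((1 / 2) * ∑ b, |π b - U b|)) := by
  classical
  have hNpos : 0 < N := by
    rw [hN]; exact Fintype.card_pos
  have hNR : (0 : ℝ) < (N : ℝ) := by exact_mod_cast hNpos
  set K : ℕ := (Finset.univ.image ident).card with hK
  -- integer lower bound on ∑ D
  have hv' : ∀ ι ∈ T, -1 ≤ v ι ∧ v ι ≤ 1 := by
    intro ι hι; rcases hv ι hι with h | h | h <;> omega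
  have hsumD : ∑ b, D b = ∑ b, (if ident b ∈ T then v (ident b) else 1) - ∑ b, marg b := by
    rw [← Finset.sum_sub_distrib]
    apply Finset.sum_congr rfl
    intro b _
    rw [hD b]
    by_cases h : ident b ∈ T <;> simp [h]
  have hkey := key_ident_sum ident T v hv'
  have hintD : ΔT - 2 * ((N : ℤ) - (K : ℤ)) + ((N : ℤ) - (M : ℤ)) ≤ ∑ b, D b := by
    rw [hsumD, hΔT, hN, hM, hK]
    omega
  -- |D b| ≤ 2
  have hDbd : ∀ b, |(D b : ℝ)| ≤ 2 := by
    intro b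
    have : |D b| ≤ 2 := by
      rw [hD b]
      by_cases h : ident b ∈ T
      · rw [if_pos h]
        rcases hv' (ident b) h with ⟨h1, h2⟩
        rcases hmarg b with h' | h' | h' <;> rw [abs_le] <;> omega
      · rw [if_neg h]
        rcases hmarg b with h' | h' | h' <;> rw [abs_le] <;> omega
    rw [← Int.cast_abs]
    exact_mod_cast this
  -- ∑ π D ≥ ∑ U D - 2 ∑ |π - U|
  have hπU : ∑ b, U b * (D b : ℝ) - 2 * ∑ b, |π b - U b| ≤ ∑ b, π b * (D b : ℝ) := by
    have h1 : ∀ b ∈ Finset.univ,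
        U b * (D b : ℝ) - 2 * |π b - U b| ≤ π b * (D b : ℝ) := by
      intro b _
      have h2 := hDbd b
      have h3 : -( |π b - U b| * |(D b : ℝ)| ) ≤ (π b - U b) * (D b : ℝ) := by
        rw [← abs_mul]
        exact neg_abs_le _
      have h4 : |π b - U b| * |(D b : ℝ)| ≤ |π b - U b| * 2 :=
        mul_le_mul_of_nonneg_left h2 (abs_nonneg _)
      nlinarith
    have := Finset.sum_le_sum h1
    rw [Finset.sum_sub_distrib, ← Finset.mul_sum] at this
    linarith
  have hUD : ∑ b, U b * (D b : ℝ) = ((∑ b, D b : ℤ) : ℝ) / (N : ℝ) := by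
    rw [Finset.sum_congr rfl (fun b _ => by rw [hU b])]
    rw [← Finset.mul_sum]
    push_cast
    ring
  -- real bound: (∑ D)/N ≥ ΔT/N - 2κ - max(lam-1,0)
  have hcast : (ΔT : ℝ) - 2 * ((N : ℝ) - (K : ℝ)) + ((N : ℝ) - (M : ℝ))
      ≤ ((∑ b, D b : ℤ) : ℝ) := by
    exact_mod_cast hintD
  have hmax : (((M : ℝ)) - (N : ℝ)) / (N : ℝ) ≤ max (lam - 1) 0 := by
    have : ((M : ℝ) - (N : ℝ)) / (N : ℝ) = lam - 1 := by
      rw [hlam]; field_simp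
    rw [this]
    exact le_max_left _ _
  have hdiv : (ΔT : ℝ) / (N : ℝ) - 2 * κ - max (lam - 1) 0
      ≤ ((∑ b, D b : ℤ) : ℝ) / (N : ℝ) := by
    have h5 : ((ΔT : ℝ) - 2 * ((N : ℝ) - (K : ℝ)) + ((N : ℝ) - (M : ℝ))) / (N : ℝ)
        ≤ ((∑ b, D b : ℤ) : ℝ) / (N : ℝ) :=
      div_le_div_of_nonneg_right hcast hNR.le
    have h6 : ((ΔT : ℝ) - 2 * ((N : ℝ) - (K : ℝ)) + ((N : ℝ) - (M : ℝ))) / (N : ℝ)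
        = (ΔT : ℝ) / (N : ℝ) - 2 * κ - ((M : ℝ) - (N : ℝ)) / (N : ℝ) := by
      rw [hκ, hK]
      field_simp
      ring
    linarith [hmax, h6 ▸ h5]
  have hmain : ∑ b, π b * (D b : ℝ) ≥
      (ΔT : ℝ) / (N : ℝ) - 2 * κ - max (lam - 1) 0 -
        4 * ((1 / 2) * ∑ b, |π b - U b|) := by
    have := hπU
    rw [hUD] at this
    linarith
  refine ⟨hmain, fun μ hμ => ?_⟩
  have hmulam : μ * lam ≤ (ΔT : ℝ) / (N : ℝ) := by
    rw [hlam, ← mul_div_assoc]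
    exact div_le_div_of_nonneg_right hμ hNR.le
  linarith
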